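/- Consider the 2×2 block matrix U = [[U_J, α 𝟏_J 𝟏_Kᵗ], [b_K 𝟏_Jᵗ, U_K]] where U_J, U_K are nonsingular, b_K = U_K e_K with e_K the last standard basis vector of the K-block, and α·(𝟏ᵗU_J⁻¹𝟏) ≠ 1. Then U is nonsingular and its inverse is the block matrix with blocks C = U_J⁻¹ + (α/(1−α μ̄_J)) μ_J ν_Jᵗ, D = (−α/(1−α μ̄_J)) μ_J ν_Kᵗ, E = (−1/(1−α μ̄_J)) e_K ν_Jᵗ, F = U_K⁻¹ + (α μ̄_J/(1−α μ̄_J)) e_K ν_Kᵗ, where μ_J = U_J⁻¹𝟏, ν_J = (U_Jᵗ)⁻¹𝟏, ν_K = (U_Kᵗ)⁻¹𝟏, and μ̄_J = 𝟏ᵗμ_J. -/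

import Mathlib

open Matrix BigOperators

private lemma mul_vmv {n p q : Type*} [Fintype p] (A : Matrix n p ℝ) (v : p → ℝ) (w : q → ℝ) :
    A * vecMulVec v w = vecMulVec (A *ᵥ v) w := by
  ext i j
  simp [Matrix.mul_apply, vecMulVec_apply, Matrix.mulVec, dotProduct, Finset.sum_mul, mul_assoc]

private lemma vmv_mul {n p q : Type*} [Fintype p] (v : n → ℝ) (w : p → ℝ) (B : Matrix p q ℝ) :
    vecMulVec v w * B = vecMulVec v (w ᵥ* B) := by
  ext i j
  simp [Matrix.mul_apply, vecMulVec_apply, Matrix.vecMul, dotProduct, Finset.mul_sum, mul_assoc]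

private lemma vecMul_vmv {n q : Type*} [Fintype n] (x v : n → ℝ) (w : q → ℝ) :
    x ᵥ* vecMulVec v w = (x ⬝ᵥ v) • w := by
  ext j
  simp [Matrix.vecMul, vecMulVec_apply, dotProduct, Finset.sum_mul, mul_assoc]

private lemma vmv_smul_right {n q : Type*} (v : n → ℝ) (s : ℝ) (w : q → ℝ) :
    vecMulVec v (s • w) = s • vecMulVec v w := by
  ext i j
  simp [vecMulVec_apply]
  ring

private lemma vmv_mulVec {n q : Type*} [Fintype q] (v : n → ℝ) (w x : q → ℝ) :
    vecMulVec v w *ᵥ x = (w ⬝ᵥ x) • v := by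
  ext i
  simp [Matrix.mulVec, vecMulVec_apply, dotProduct, Finset.sum_mul, Finset.mul_sum, mul_assoc]
  exact Finset.sum_congr rfl fun j _ => by ring

private lemma vmv_smul_left {n q : Type*} (s : ℝ) (v : n → ℝ) (w : q → ℝ) :
    vecMulVec (s • v) w = s • vecMulVec v w := by
  ext i j
  simp [vecMulVec_apply]
  ring

theorem block_inverse_formula (m k : ℕ)
    (UJ : Matrix (Fin m) (Fin m) ℝ) (UK : Matrix (Fin (k + 1)) (Fin (k + 1)) ℝ)
    (α : ℝ) (hJ : IsUnit UJ.det) (hK : IsUnit UK.det)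
    (eK : Fin (k + 1) → ℝ) (heK : eK = Pi.single (Fin.last k) 1)
    (μJ : Fin m → ℝ) (hμJ : μJ = UJ⁻¹ *ᵥ (fun _ => 1))
    (νJ : Fin m → ℝ) (hνJ : νJ = (UJᵀ)⁻¹ *ᵥ (fun _ => 1))
    (νK : Fin (k + 1) → ℝ) (hνK : νK = (UKᵀ)⁻¹ *ᵥ (fun _ => 1))
    (μbarJ : ℝ) (hμbarJ : μbarJ = ∑ i, μJ i)
    (hα : α * μbarJ ≠ 1)
    (U : Matrix (Fin m ⊕ Fin (k + 1)) (Fin m ⊕ Fin (k + 1)) ℝ)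
    (hU : U = fromBlocks UJ (α • vecMulVec (fun _ => 1) (fun _ => 1))
      (vecMulVec (UK *ᵥ eK) (fun _ => 1)) UK) :
    IsUnit U.det ∧
      U⁻¹ = fromBlocks
        (UJ⁻¹ + (α / (1 - α * μbarJ)) • vecMulVec μJ νJ)
        ((-α / (1 - α * μbarJ)) • vecMulVec μJ νK)
        ((-1 / (1 - α * μbarJ)) • vecMulVec eK νJ)
        (UK⁻¹ + (α * μbarJ / (1 - α * μbarJ)) • vecMulVec eK νK) := by
  have hc : 1 - α * μbarJ ≠ 0 := fun h => hα (by linarith)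
  have hJ1 : UJ * UJ⁻¹ = 1 := mul_nonsing_inv _ hJ
  have hK1 : UK * UK⁻¹ = 1 := mul_nonsing_inv _ hK
  have hμ : UJ *ᵥ μJ = (fun _ => (1 : ℝ)) := by
    rw [hμJ, mulVec_mulVec, hJ1, one_mulVec]
  have hνJ' : (fun _ => (1 : ℝ)) ᵥ* UJ⁻¹ = νJ := by
    rw [hνJ, ← transpose_nonsing_inv, mulVec_transpose]
  have hνK' : (fun _ => (1 : ℝ)) ᵥ* UK⁻¹ = νK := by
    rw [hνK, ← transpose_nonsing_inv, mulVec_transpose]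
  have hde : (fun _ => (1 : ℝ)) ⬝ᵥ eK = 1 := by
    subst heK; simp [dotProduct]
  have hdμ : (fun _ => (1 : ℝ)) ⬝ᵥ μJ = μbarJ := by
    simp [dotProduct, hμbarJ]
  have hUV : U * fromBlocks
        (UJ⁻¹ + (α / (1 - α * μbarJ)) • vecMulVec μJ νJ)
        ((-α / (1 - α * μbarJ)) • vecMulVec μJ νK)
        ((-1 / (1 - α * μbarJ)) • vecMulVec eK νJ)
        (UK⁻¹ + (α * μbarJ / (1 - α * μbarJ)) • vecMulVec eK νK) = 1 := by
    rw [hU, fromBlocks_multiply, ← fromBlocks_one]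
    rw [fromBlocks_inj]
    refine ⟨?_, ?_, ?_, ?_⟩
    · simp only [Matrix.mul_add, Matrix.mul_smul, Matrix.smul_mul, mul_vmv, vmv_mul,
        vecMul_vmv, vmv_mulVec, vmv_smul_right, vmv_smul_left, hJ1, hμ, hνJ', hνK', hde, hdμ]
      match_scalars <;> field_simp <;> ring
    · simp only [Matrix.mul_add, Matrix.mul_smul, Matrix.smul_mul, mul_vmv, vmv_mul,
        vecMul_vmv, vmv_mulVec, vmv_smul_right, vmv_smul_left, hK1, hμ, hνJ', hνK', hde, hdμ]
      match_scalars <;> field_simp <;> ring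
    · simp only [Matrix.mul_add, Matrix.mul_smul, Matrix.smul_mul, mul_vmv, vmv_mul,
        vecMul_vmv, vmv_mulVec, vmv_smul_right, vmv_smul_left, hJ1, hμ, hνJ', hνK', hde, hdμ]
      match_scalars <;> field_simp <;> ring
    · simp only [Matrix.mul_add, Matrix.mul_smul, Matrix.smul_mul, mul_vmv, vmv_mul,
        vecMul_vmv, vmv_mulVec, vmv_smul_right, vmv_smul_left, hK1, hμ, hνJ', hνK', hde, hdμ]
      match_scalars <;> field_simp <;> ring
  exact ⟨Matrix.isUnit_det_of_right_inverse hUV, Matrix.inv_eq_right_inv hUV⟩
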